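/- Fix a positive integer m. Let G and G' be finite groups with |G| = |G'| = m, let k ≥ 1, and let g ∈ G and g' ∈ G' be elements such that g = 1 if and only if g' = 1. Then the number of k-tuples (g₁,…,g_k) ∈ G^k with g_i ≠ 1 for all i and g₁g₂⋯g_k = g equals the number of k-tuples (g'₁,…,g'_k) ∈ (G')^k with g'_i ≠ 1 for all i and g'₁g'₂⋯g'_k = g'. In particular this count depends only on m, k, and whether the target element is the identity. -/

import Mathlib

open Classical

noncomputable def Nfac (G : Type*) [Group G] [Finite G] (k : ℕ) (g : G) : ℕ :=
  Nat.card {t : Fin k → G // (∀ i, t i ≠ 1) ∧ (List.ofFn t).prod = g}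

lemma Nfac_one (G : Type*) [Group G] [Finite G] (g : G) :
    Nfac G 1 g = if g = 1 then 0 else 1 := by
  unfold Nfac
  split
  · subst ‹g = 1›
    haveI : IsEmpty {t : Fin 1 → G // (∀ i, t i ≠ 1) ∧ (List.ofFn t).prod = 1} := by
      constructor
      rintro ⟨t, h1, h2⟩
      simp [List.ofFn_succ] at h2
      exact h1 0 h2
    exact Nat.card_of_isEmpty
  · rw [Nat.card_eq_one_iff_unique.mpr]
    constructor
    · constructor
      rintro ⟨t, h1, h2⟩ ⟨s, h3, h4⟩
      simp [List.ofFn_succ] at h2 h4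
      ext i
      have : i = 0 := Subsingleton.elim i 0
      simp [this, h2, h4]
    · exact ⟨⟨fun _ => g, fun i => ‹g ≠ 1›, by simp [List.ofFn_succ]⟩⟩

lemma Nfac_succ (G : Type*) [Group G] [Fintype G] (k : ℕ) (g : G) :
    Nfac G (k + 1) g = ∑ h : {h : G // h ≠ 1}, Nfac G k ((h : G)⁻¹ * g) := by
  have e : {t : Fin (k+1) → G // (∀ i, t i ≠ 1) ∧ (List.ofFn t).prod = g} ≃
      Σ h : {h : G // h ≠ 1}, {t : Fin k → G // (∀ i, t i ≠ 1) ∧ (List.ofFn t).prod = (h : G)⁻¹ * g} := by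
    refine ⟨fun t => ⟨⟨t.1 0, t.2.1 0⟩, ⟨fun i => t.1 i.succ, fun i => t.2.1 i.succ, ?_⟩⟩,
      fun p => ⟨Fin.cons p.1.1 p.2.1, ?_, ?_⟩, ?_, ?_⟩
    · have := t.2.2
      rw [List.ofFn_succ, List.prod_cons] at this
      rw [eq_inv_mul_iff_mul_eq, this]
    · intro i
      refine Fin.cases ?_ ?_ i
      · exact p.1.2
      · intro j; exact p.2.2.1 j
    · rw [List.ofFn_succ, List.prod_cons]
      simp only [Fin.cons_zero, Fin.cons_succ]
      rw [p.2.2.2, mul_inv_cancel_left]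
    · rintro ⟨t, h1, h2⟩
      ext i
      refine Fin.cases ?_ ?_ i <;> simp
    · rintro ⟨h, t, h1, h2⟩
      simp
      exact HEq.rfl
  unfold Nfac
  rw [Nat.card_congr e, Nat.card_eq_fintype_card, Fintype.card_sigma]
  refine Finset.sum_congr rfl fun h _ => ?_
  exact Nat.card_eq_fintype_card.symm

lemma card_ne_one (G : Type*) [Group G] [Fintype G] :
    Nat.card {h : G // h ≠ 1} = Nat.card G - 1 := by
  rw [Nat.card_eq_fintype_card, Nat.card_eq_fintype_card]
  have : Fintype.card {h : G // ¬ (h = 1)} = Fintype.card G - Fintype.card {h : G // h = 1} :=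
    Fintype.card_subtype_compl _
  rw [this, Fintype.card_subtype_eq]

lemma Nfac_aux (k : ℕ) : ∀ (G : Type u) (G' : Type v) [Group G] [Group G'] [Finite G] [Finite G'],
    Nat.card G = Nat.card G' → ∀ (g : G) (g' : G'), (g = 1 ↔ g' = 1) →
    Nfac G (k+1) g = Nfac G' (k+1) g' := by
  induction k with
  | zero =>
    intro G G' _ _ _ _ hcard g g' hgg'
    rw [Nfac_one, Nfac_one]
    by_cases hg : g = 1
    · simp [hg, hgg'.mp hg]
    · have hg' : g' ≠ 1 := fun h => hg (hgg'.mpr h)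
      simp [hg, hg']
  | succ n ih =>
    intro G G' _ _ _ _ hcard g g' hgg'
    haveI := Fintype.ofFinite G
    haveI := Fintype.ofFinite G'
    rw [Nfac_succ, Nfac_succ]
    have hcard' : Nat.card {h : G // h ≠ 1} = Nat.card {h' : G' // h' ≠ 1} := by
      rw [card_ne_one, card_ne_one, hcard]
    obtain ⟨e⟩ := Finite.card_eq.mp hcard'
    by_cases hg : g = 1
    · have hg' : g' = 1 := hgg'.mp hg
      refine Fintype.sum_equiv e _ _ ?_
      intro h
      refine ih G G' hcard _ _ ?_
      subst hg; subst hg'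
      simp [h.2, (e h).2]
    · have hg' : g' ≠ 1 := fun h => hg (hgg'.mpr h)
      set σ : {h : G // h ≠ 1} ≃ {h' : G' // h' ≠ 1} :=
        e.trans (Equiv.swap (e ⟨g, hg⟩) ⟨g', hg'⟩) with hσ
      have hσg : σ ⟨g, hg⟩ = ⟨g', hg'⟩ := by simp [hσ]
      refine Fintype.sum_equiv σ _ _ ?_
      intro h
      refine ih G G' hcard _ _ ?_
      constructor
      · intro hyp
        have : (h : G) = g := by rw [inv_mul_eq_one] at hyp; exact hyp
        have : h = ⟨g, hg⟩ := Subtype.ext this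
        rw [this, hσg]
        simp
      · intro hyp
        have : (σ h : G') = g' := by rw [inv_mul_eq_one] at hyp; exact hyp
        have h2 : σ h = ⟨g', hg'⟩ := Subtype.ext this
        have : h = ⟨g, hg⟩ := σ.injective (h2.trans hσg.symm)
        rw [this]
        simp

theorem card_factorizations_depends_only_on_order (m : ℕ) (hm : 0 < m)
    (G G' : Type*) [Group G] [Group G'] [Finite G] [Finite G']
    (hG : Nat.card G = m) (hG' : Nat.card G' = m)
    (k : ℕ) (hk : 1 ≤ k) (g : G) (g' : G') (h : g = 1 ↔ g' = 1) :
    Nat.card {t : Fin k → G // (∀ i, t i ≠ 1) ∧ (List.ofFn t).prod = g} =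
      Nat.card {t : Fin k → G' // (∀ i, t i ≠ 1) ∧ (List.ofFn t).prod = g'} := by
  obtain ⟨n, rfl⟩ : ∃ n, k = n + 1 := ⟨k - 1, (Nat.succ_pred_eq_of_pos hk).symm⟩
  have := Nfac_aux n G G' (hG.trans hG'.symm) g g' h
  simpa [Nfac] using this
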